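/- Let S be a nonempty finite set of natural numbers each of which is prime. Then the rational number ∑_{p ∈ S} 1/p, written in lowest terms, has denominator exactly ∏_{p ∈ S} p; in other words, the fraction (∑_{p ∈ S} ∏_{q ∈ S, q ≠ p} q) / (∏_{p ∈ S} p) cannot be simplified. -/

import Mathlib

lemma den_add_of_coprime (q r : ℚ) (h : Nat.Coprime q.den r.den) :
    (q + r).den = q.den * r.den := by
  have hq : IsCoprime q.num (q.den : ℤ) := Int.isCoprime_iff_gcd_eq_one.2 q.reduced
  have hr : IsCoprime r.num (r.den : ℤ) := Int.isCoprime_iff_gcd_eq_one.2 r.reduced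
  have hqr : IsCoprime (q.den : ℤ) (r.den : ℤ) := by
    rw [Int.isCoprime_iff_gcd_eq_one]; simpa using h
  have hco : IsCoprime (q.num * r.den + q.den * r.num) ((q.den : ℤ) * r.den) := by
    apply IsCoprime.mul_right
    · have h1 : IsCoprime (q.num * r.den) (q.den : ℤ) := hq.mul_left hqr.symm
      exact h1.add_mul_left_left r.num
    · have h1 : IsCoprime (q.den * r.num) (r.den : ℤ) := hqr.mul_left hr
      have := h1.add_mul_left_left q.num
      convert this using 1; rfl; ring
  have hpos : (0:ℤ) < (q.den : ℤ) * r.den := by positivity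
  have := Rat.den_div_eq_of_coprime hpos (by
    have := Int.isCoprime_iff_gcd_eq_one.1 hco; rwa [Int.gcd] at this)
  rw [Rat.add_num_den q r, Rat.divInt_eq_div]; exact_mod_cast this

lemma den_one_div_prime (p : ℕ) (hp : Nat.Prime p) : ((1:ℚ)/(p:ℚ)).den = p := by
  have hpos : (0:ℤ) < (p:ℤ) := by exact_mod_cast hp.pos
  have := Rat.den_div_eq_of_coprime (a := 1) hpos (by simp)
  have h2 : ((1:ℤ):ℚ)/((p:ℤ):ℚ) = (1:ℚ)/(p:ℚ) := by push_cast; ring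
  rw [h2] at this
  exact_mod_cast this

theorem den_sum_one_div_primes (S : Finset ℕ) (hne : S.Nonempty)
    (hS : ∀ p ∈ S, Nat.Prime p) :
    (∑ p ∈ S, (1 : ℚ) / (p : ℚ)).den = ∏ p ∈ S, p := by
  induction hne using Finset.Nonempty.cons_induction with
  | singleton a => simpa using den_one_div_prime a (hS a (by simp))
  | cons a s ha hs ih =>
    have hprim : ∀ p ∈ s, Nat.Prime p := fun p hp => hS p (Finset.mem_cons_of_mem hp)
    have ha' : Nat.Prime a := hS a (Finset.mem_cons_self a s)
    have ih' := ih hprim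
    rw [Finset.sum_cons, Finset.prod_cons]
    rw [den_add_of_coprime]
    · rw [den_one_div_prime a ha', ih']
    · rw [den_one_div_prime a ha', ih']
      apply Nat.Coprime.prod_right
      intro p hp
      exact (Nat.coprime_primes ha' (hprim p hp)).2 (fun h => ha (h ▸ hp))
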